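/- Let f : 𝔹ⁿ → 𝔹ⁿ be holomorphic, holomorphic at p ∈ ∂𝔹ⁿ, with f(p) = p, and set λ := Re⟨J_f(p)p, p⟩. Then the directional derivative of z ↦ |f(z)| at p in the direction p exists and equals λ, and λ ≥ |1 − ⟨f(0), p⟩|²/(1 − |f(0)|²) > 0. -/

import Mathlib

open Metric Set Filter

set_option maxHeartbeats 1000000

noncomputable section

local notation "𝔼" n => EuclideanSpace ℂ (Fin n)

lemma ball_schwarz {n : ℕ} {h : (𝔼 n) → (𝔼 n)}
    (hd : DifferentiableOn ℂ h (ball 0 1)) (hm : MapsTo h (ball 0 1) (ball 0 1))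
    (h0 : h 0 = 0) {z : 𝔼 n} (hz : z ∈ ball (0 : 𝔼 n) 1) : ‖h z‖ ≤ ‖z‖ := by
  rcases eq_or_ne z 0 with rfl | hz0
  · simp [h0]
  have hr0 : (0 : ℝ) < ‖z‖ := norm_pos_iff.2 hz0
  have hr1 : ‖z‖ < 1 := mem_ball_zero_iff.1 hz
  set e : 𝔼 n := ((‖z‖ : ℂ))⁻¹ • z with he
  have hne : ‖e‖ = 1 := by
    rw [he, norm_smul]
    simp [hr0.ne']
  set F : ℂ → 𝔼 n := fun ζ => h (ζ • e) with hF
  have hmem : ∀ ζ : ℂ, ζ ∈ ball (0 : ℂ) 1 → ζ • e ∈ ball (0 : 𝔼 n) 1 := by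
    intro ζ hζ
    rw [mem_ball_zero_iff] at hζ ⊢
    rw [norm_smul, hne, mul_one]
    exact hζ
  have hdF : DifferentiableOn ℂ F (ball 0 1) := by
    apply hd.comp (fun ζ _ => (differentiableAt_id.smul_const e).differentiableWithinAt) hmem
  have hmF : MapsTo F (ball 0 1) (ball (F 0) 1) := by
    intro ζ hζ
    have : F 0 = 0 := by simp [hF, h0]
    rw [this]
    exact hm (hmem ζ hζ)
  have hzmem : ((‖z‖ : ℝ) : ℂ) ∈ ball (0 : ℂ) 1 := by
    rw [mem_ball_zero_iff]
    simpa using hr1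
  have := Complex.dist_le_div_mul_dist_of_mapsTo_ball hdF (hmF.mono_right ball_subset_closedBall) hzmem
  have hFz : F ((‖z‖ : ℝ) : ℂ) = h z := by
    rw [hF]
    simp only [he, smul_smul]
    rw [mul_inv_cancel₀ (by exact_mod_cast hr0.ne'), one_smul]
  have hF0 : F 0 = 0 := by simp [hF, h0]
  rw [hFz, hF0] at this
  simpa [dist_zero_right, abs_of_pos hr0] using this

lemma moebius_scalar (t s W : ℝ) (α : ℂ) (ht : t ≠ 0) (hs : s ^ 2 = 1 - t) :
    ‖(1 : ℂ) - α‖ ^ 2 =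
      (Complex.normSq (1 - (1 - s) * α / (t : ℂ)) * t + s ^ 2 * W
        - 2 * s * ((starRingEnd ℂ (1 - (1 - s) * α / (t : ℂ))) * α).re)
      + (1 - t) * (1 - W) := by
  obtain rfl : t = 1 - s ^ 2 := by linarith
  obtain ⟨x, y⟩ := α
  rw [Complex.sq_norm]
  simp only [Complex.normSq_apply, Complex.sq_norm, Complex.sub_re, Complex.sub_im,
    Complex.one_re, Complex.one_im, Complex.mul_re, Complex.mul_im, Complex.div_re,
    Complex.div_im, Complex.ofReal_re, Complex.ofReal_im, Complex.conj_re, Complex.conj_im,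
    map_sub, map_mul, map_one, Complex.conj_ofReal,
    Complex.normSq_mk, Complex.normSq_ofReal]
  field_simp
  ring

lemma moebius_identity{n : ℕ} (a w : 𝔼 n) (ha : a ≠ 0) (ha1 : ‖a‖ ≤ 1) :
    ‖(1 : ℂ) - (inner ℂ a w : ℂ)‖ ^ 2 =
      ‖(1 - (1 - (Real.sqrt (1 - ‖a‖ ^ 2) : ℂ)) * (inner ℂ a w : ℂ) / ((‖a‖ ^ 2 : ℝ) : ℂ)) • a
        - ((Real.sqrt (1 - ‖a‖ ^ 2) : ℝ) : ℂ) • w‖ ^ 2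
      + (1 - ‖a‖ ^ 2) * (1 - ‖w‖ ^ 2) := by
  set α : ℂ := (inner ℂ a w : ℂ) with hα
  set s : ℝ := Real.sqrt (1 - ‖a‖ ^ 2) with hsdef
  set t : ℝ := ‖a‖ ^ 2 with htdef
  set c : ℂ := 1 - (1 - (s : ℂ)) * α / (t : ℂ) with hc
  have ht : t ≠ 0 := pow_ne_zero 2 (norm_ne_zero_iff.2 ha)
  have hs : s ^ 2 = 1 - t := Real.sq_sqrt (by nlinarith [norm_nonneg a])
  have key : ‖c • a - ((s : ℝ) : ℂ) • w‖ ^ 2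
      = Complex.normSq c * t + s ^ 2 * ‖w‖ ^ 2 - 2 * s * ((starRingEnd ℂ c) * α).re := by
    rw [@norm_sub_sq ℂ]
    have h1 : ‖c • a‖ ^ 2 = Complex.normSq c * t := by
      rw [norm_smul, mul_pow, htdef, Complex.sq_norm]
    have h2 : ‖((s : ℝ) : ℂ) • w‖ ^ 2 = s ^ 2 * ‖w‖ ^ 2 := by
      rw [norm_smul, mul_pow, Complex.norm_real, Real.norm_eq_abs, sq_abs]
    have h3 : (RCLike.re (inner ℂ (c • a) (((s : ℝ) : ℂ) • w) : ℂ) : ℝ)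
        = s * ((starRingEnd ℂ c) * α).re := by
      rw [inner_smul_left, inner_smul_right, ← hα]
      rw [show (starRingEnd ℂ c) * ((s : ℂ) * α) = (s : ℂ) * ((starRingEnd ℂ c) * α) by ring]
      simp [Complex.re_ofReal_mul]
    rw [h1, h2, h3]
    ring
  rw [key]
  have := moebius_scalar t s (‖w‖ ^ 2) α ht hs
  rw [hs] at this ⊢
  convert this using 3

lemma ball_key {n : ℕ} {f : (𝔼 n) → (𝔼 n)}
    (hf : DifferentiableOn ℂ f (ball 0 1)) (hfself : MapsTo f (ball 0 1) (ball 0 1))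
    {z : 𝔼 n} (hz : z ∈ ball (0 : 𝔼 n) 1) :
    ‖(1 : ℂ) - (inner ℂ (f 0) (f z) : ℂ)‖ ^ 2 * (1 - ‖z‖ ^ 2)
      ≤ (1 - ‖f 0‖ ^ 2) * (1 - ‖f z‖ ^ 2) := by
  have h0mem : (0 : 𝔼 n) ∈ ball (0 : 𝔼 n) 1 := mem_ball_self one_pos
  set a : 𝔼 n := f 0 with hadef
  have ha1 : ‖a‖ < 1 := mem_ball_zero_iff.1 (hfself h0mem)
  have hfz1 : ‖f z‖ < 1 := mem_ball_zero_iff.1 (hfself hz)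
  rcases eq_or_ne a 0 with ha0 | ha0
  · -- a = 0 : direct Schwarz
    have hsch : ‖f z‖ ≤ ‖z‖ := ball_schwarz hf hfself ha0 hz
    have h2 : ‖f z‖ ^ 2 ≤ ‖z‖ ^ 2 := by
      exact pow_le_pow_left₀ (norm_nonneg _) hsch 2
    rw [ha0]
    simp only [inner_zero_left, norm_zero, sub_zero, norm_one, one_pow, one_mul, zero_pow]
    norm_num
    linarith
  · -- a ≠ 0 : compose with the Möbius automorphism moving `a` to `0`
    set s : ℝ := Real.sqrt (1 - ‖a‖ ^ 2) with hsdef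
    set t : ℝ := ‖a‖ ^ 2 with htdef
    set φ : (𝔼 n) → (𝔼 n) := fun w =>
      ((1 : ℂ) - (inner ℂ a w : ℂ))⁻¹ •
        ((1 - (1 - (s : ℂ)) * (inner ℂ a w : ℂ) / (t : ℂ)) • a - ((s : ℝ) : ℂ) • w) with hφdef
    -- denominator never vanishes on the closed unit ball interior
    have hden : ∀ w : 𝔼 n, ‖w‖ < 1 → (1 : ℂ) - (inner ℂ a w : ℂ) ≠ 0 := by
      intro w hw h
      have h1 : (inner ℂ a w : ℂ) = 1 := by
        have := sub_eq_zero.1 h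
        exact this.symm
      have h2 : ‖(inner ℂ a w : ℂ)‖ ≤ ‖a‖ * ‖w‖ := norm_inner_le_norm a w
      rw [h1] at h2
      simp only [norm_one] at h2
      nlinarith [norm_nonneg a, norm_nonneg w]
    -- key identity
    have hiden : ∀ w : 𝔼 n, ‖w‖ < 1 →
        ‖(1 : ℂ) - (inner ℂ a w : ℂ)‖ ^ 2 * (1 - ‖φ w‖ ^ 2) = (1 - t) * (1 - ‖w‖ ^ 2) := by
      intro w hw
      have hmi := moebius_identity a w ha0 ha1.le
      have hnφ : ‖φ w‖ = ‖(1 - (1 - (s : ℂ)) * (inner ℂ a w : ℂ) / (t : ℂ)) • a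
          - ((s : ℝ) : ℂ) • w‖ / ‖(1 : ℂ) - (inner ℂ a w : ℂ)‖ := by
        rw [hφdef]
        simp only [norm_smul, norm_inv]
        rw [inv_mul_eq_div]
      have hX : ‖(1 : ℂ) - (inner ℂ a w : ℂ)‖ ≠ 0 := norm_ne_zero_iff.2 (hden w hw)
      have this : ‖φ w‖ ^ 2 * ‖(1 : ℂ) - (inner ℂ a w : ℂ)‖ ^ 2
          = ‖(1 - (1 - (s : ℂ)) * (inner ℂ a w : ℂ) / (t : ℂ)) • a - ((s : ℝ) : ℂ) • w‖ ^ 2 := by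
        rw [hnφ, div_pow, div_mul_cancel₀ _ (pow_ne_zero 2 hX)]
      rw [← htdef, ← hsdef] at hmi
      linear_combination hmi - this
    -- φ maps the ball to itself
    have hφmaps : MapsTo φ (ball (0 : 𝔼 n) 1) (ball (0 : 𝔼 n) 1) := by
      intro w hw
      rw [mem_ball_zero_iff] at hw ⊢
      have h1 := hiden w hw
      have ht1 : (0:ℝ) < 1 - t := by rw [htdef]; nlinarith [norm_nonneg a]
      have h2 : (0:ℝ) < ‖(1 : ℂ) - (inner ℂ a w : ℂ)‖ ^ 2 :=
        pow_pos (norm_pos_iff.2 (hden w hw)) 2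
      have hw2 : (0:ℝ) < 1 - ‖w‖ ^ 2 := by nlinarith [norm_nonneg w]
      have hQ : ‖φ w‖ ^ 2 < 1 ^ 2 := by nlinarith [mul_pos ht1 hw2]
      exact lt_of_pow_lt_pow_left₀ 2 zero_le_one hQ
    -- φ is differentiable where the denominator doesn't vanish
    have hφdiff : ∀ w : 𝔼 n, (1 : ℂ) - (inner ℂ a w : ℂ) ≠ 0 → DifferentiableAt ℂ φ w := by
      intro w hw
      have hinner : DifferentiableAt ℂ (fun w : 𝔼 n => (inner ℂ a w : ℂ)) w :=
        (innerSL ℂ a).differentiableAt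
      have hc : DifferentiableAt ℂ
          (fun w : 𝔼 n => 1 - (1 - (s : ℂ)) * (inner ℂ a w : ℂ) / (t : ℂ)) w := by
        fun_prop
      apply DifferentiableAt.fun_smul
      · exact ((differentiableAt_const (1:ℂ)).sub hinner).inv hw
      · exact (hc.smul_const a).sub (differentiableAt_fun_id.fun_const_smul _)
    -- h := φ ∘ f
    have hφa : φ a = 0 := by
      rw [hφdef]
      simp only
      have hta : (inner ℂ a a : ℂ) = ((t:ℝ) : ℂ) := by
        rw [htdef]
        exact_mod_cast inner_self_eq_norm_sq_to_K a
      rw [hta]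
      have htne : ((t:ℝ):ℂ) ≠ 0 := by
        rw [htdef]
        exact_mod_cast pow_ne_zero 2 (norm_ne_zero_iff.2 ha0)
      rw [mul_div_assoc, div_self htne, mul_one, sub_sub_cancel]
      rw [sub_self, smul_zero]
    have hcomp : DifferentiableOn ℂ (φ ∘ f) (ball 0 1) := by
      intro w hw
      exact ((hφdiff (f w) (hden _ (mem_ball_zero_iff.1 (hfself hw)))).comp_differentiableWithinAt
        w (hf w hw))
    have hcomp0 : (φ ∘ f) 0 = 0 := by
      simp only [Function.comp_apply, ← hadef, hφa]
    have hcompmaps : MapsTo (φ ∘ f) (ball 0 1) (ball 0 1) := fun w hw => hφmaps (hfself hw)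
    have hsch : ‖(φ ∘ f) z‖ ≤ ‖z‖ := ball_schwarz hcomp hcompmaps hcomp0 hz
    have h2 : ‖(φ ∘ f) z‖ ^ 2 ≤ ‖z‖ ^ 2 := pow_le_pow_left₀ (norm_nonneg _) hsch 2
    have h1 := hiden (f z) hfz1
    have hpos : (0:ℝ) ≤ ‖(1 : ℂ) - (inner ℂ a (f z) : ℂ)‖ ^ 2 := sq_nonneg _
    calc ‖(1 : ℂ) - (inner ℂ a (f z) : ℂ)‖ ^ 2 * (1 - ‖z‖ ^ 2)
        ≤ ‖(1 : ℂ) - (inner ℂ a (f z) : ℂ)‖ ^ 2 * (1 - ‖(φ ∘ f) z‖ ^ 2) := by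
          apply mul_le_mul_of_nonneg_left _ hpos
          linarith
      _ = (1 - t) * (1 - ‖f z‖ ^ 2) := h1
      _ = (1 - ‖a‖ ^ 2) * (1 - ‖f z‖ ^ 2) := by rw [htdef]

/-- **Boundary Schwarz lemma on the ball, part (i).**  With `λ := Re⟨J_f(p)p, p⟩`:
the directional derivative of `|f|` at `p` in the direction `p` exists and equals
`λ`, and `λ ≥ |1 − ⟨f(0), p⟩|²/(1 − |f(0)|²) > 0`. -/
theorem ball_boundary_schwarz_normal_derivative
    {n : ℕ} (hn : 1 ≤ n)
    -- `f` is a holomorphic self-map of the unit ball `𝔹ⁿ`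
    (f : EuclideanSpace ℂ (Fin n) → EuclideanSpace ℂ (Fin n))
    (hf : DifferentiableOn ℂ f (Metric.ball 0 1))
    (hfself : MapsTo f (Metric.ball 0 1) (Metric.ball 0 1))
    -- `f` is holomorphic at `p ∈ ∂𝔹ⁿ`: it extends holomorphically as `g` near `p`
    (p : EuclideanSpace ℂ (Fin n)) (hp : ‖p‖ = 1)
    (g : EuclideanSpace ℂ (Fin n) → EuclideanSpace ℂ (Fin n))
    (U : Set (EuclideanSpace ℂ (Fin n))) (hUopen : IsOpen U) (hpU : p ∈ U)
    (hg : DifferentiableOn ℂ g U) (hfg : EqOn f g (Metric.ball 0 1 ∩ U))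
    (hgp : g p = p)
    :
    Tendsto (fun t : ℝ => (‖g (p + t • p)‖ - ‖g p‖) / t) (nhdsWithin 0 {0}ᶜ)
      (nhds ((inner ℂ p (fderiv ℂ g p p) : ℂ).re)) ∧
    ‖(1 : ℂ) - (inner ℂ p (f 0) : ℂ)‖ ^ 2 / (1 - ‖f 0‖ ^ 2) ≤
      (inner ℂ p (fderiv ℂ g p p) : ℂ).re ∧
    0 < ‖(1 : ℂ) - (inner ℂ p (f 0) : ℂ)‖ ^ 2 / (1 - ‖f 0‖ ^ 2) := by
  refine ⟨?_, ?_⟩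
  · -- part (1): the normal derivative exists
      have hgd : DifferentiableAt ℂ g p := hg.differentiableAt (hUopen.mem_nhds hpU)
      set L := fderiv ℂ g p with hLdef
      set D : 𝔼 n := L p with hDdef
      have hL : HasFDerivAt g L p := hgd.hasFDerivAt
      set G : ℝ → 𝔼 n := fun t => g (p + t • p) with hGdef
      have hγ : HasDerivAt (fun t : ℝ => p + t • p) p 0 := by
        simpa using ((hasDerivAt_id (0:ℝ)).smul_const p).const_add p
      have hG0 : G 0 = p := by simp [hGdef, hgp]
      have hL' : HasFDerivAt g (L.restrictScalars ℝ) ((fun t : ℝ => p + t • p) 0) := by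
        simpa using hL.restrictScalars ℝ
      have hGd : HasDerivAt G D 0 := by
        simpa [hGdef, hDdef, Function.comp_def] using hL'.comp_hasDerivAt 0 hγ
      -- derivative of the squared norm
      have hq2 : HasDerivAt (fun t => (inner ℂ (G t) (G t) : ℂ))
          ((inner ℂ (G 0) D : ℂ) + (inner ℂ D (G 0) : ℂ)) 0 := hGd.inner ℂ hGd
      have hq2re : HasDerivAt (fun t => ((inner ℂ (G t) (G t) : ℂ)).re)
          (((inner ℂ (G 0) D : ℂ) + (inner ℂ D (G 0) : ℂ)).re) 0 :=
        Complex.reCLM.hasFDerivAt.comp_hasDerivAt 0 hq2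
      have hsqnorm : (fun t => ((inner ℂ (G t) (G t) : ℂ)).re) = fun t => ‖G t‖ ^ 2 := by
        funext t
        exact_mod_cast @inner_self_eq_norm_sq ℂ _ _ _ _ (G t)
      rw [hsqnorm] at hq2re
      have hval : ((inner ℂ (G 0) D : ℂ) + (inner ℂ D (G 0) : ℂ)).re
          = 2 * (inner ℂ p D : ℂ).re := by
        rw [hG0]
        rw [Complex.add_re]
        have : (inner ℂ D p : ℂ) = starRingEnd ℂ (inner ℂ p D : ℂ) := by
          rw [inner_conj_symm]
        rw [this, Complex.conj_re]
        ring
      rw [hval] at hq2re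
      -- compose with sqrt
      have h1 : ‖G 0‖ ^ 2 = 1 := by rw [hG0, hp]; norm_num
      have hsqrt : HasDerivAt Real.sqrt (1 / (2 * Real.sqrt (‖G 0‖ ^ 2))) (‖G 0‖ ^ 2) :=
        Real.hasDerivAt_sqrt (by rw [h1]; norm_num)
      have hcomp : HasDerivAt (fun t => Real.sqrt (‖G t‖ ^ 2))
          (1 / (2 * Real.sqrt (‖G 0‖ ^ 2)) * (2 * (inner ℂ p D : ℂ).re)) 0 :=
        hsqrt.comp 0 hq2re
      have hnorm : (fun t => Real.sqrt (‖G t‖ ^ 2)) = fun t => ‖G t‖ := by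
        funext t
        exact Real.sqrt_sq (norm_nonneg _)
      rw [hnorm, h1] at hcomp
      have hder : HasDerivAt (fun t => ‖G t‖) ((inner ℂ p D : ℂ).re) 0 := by
        convert hcomp using 1
        rw [Real.sqrt_one]
        ring
      have := hasDerivAt_iff_tendsto_slope.1 hder
      apply this.congr'
      filter_upwards [self_mem_nhdsWithin] with t ht
      have hG0' : G 0 = g p := by simp [hGdef]
      simp only [slope_def_field, slope, vsub_eq_sub, sub_zero, hG0']
      rw [div_eq_inv_mul]
      rfl
  · -- parts (2) and (3): the lower bound
      have hgd : DifferentiableAt ℂ g p := hg.differentiableAt (hUopen.mem_nhds hpU)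
      set L := fderiv ℂ g p with hLdef
      set D : 𝔼 n := L p with hDdef
      have hL : HasFDerivAt g L p := hgd.hasFDerivAt
      set G : ℝ → 𝔼 n := fun t => g (p + t • p) with hGdef
      have hγ : HasDerivAt (fun t : ℝ => p + t • p) p 0 := by
        simpa using ((hasDerivAt_id (0:ℝ)).smul_const p).const_add p
      have hG0 : G 0 = p := by simp [hGdef, hgp]
      have hL' : HasFDerivAt g (L.restrictScalars ℝ) ((fun t : ℝ => p + t • p) 0) := by
        simpa using hL.restrictScalars ℝ
      have hGd : HasDerivAt G D 0 := by
        simpa [hGdef, hDdef, Function.comp_def] using hL'.comp_hasDerivAt 0 hγ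
      -- basic facts about a := f 0
      have h0mem : (0 : 𝔼 n) ∈ ball (0 : 𝔼 n) 1 := mem_ball_self one_pos
      set a : 𝔼 n := f 0 with hadef
      have ha1 : ‖a‖ < 1 := mem_ball_zero_iff.1 (hfself h0mem)
      have hden : (0:ℝ) < 1 - ‖a‖ ^ 2 := by nlinarith [norm_nonneg a]
      have hnum : (1 : ℂ) - (inner ℂ p a : ℂ) ≠ 0 := by
        intro h
        have h1 : (inner ℂ p a : ℂ) = 1 := by
          have := sub_eq_zero.1 h; exact this.symm
        have h2 : ‖(inner ℂ p a : ℂ)‖ ≤ ‖p‖ * ‖a‖ := norm_inner_le_norm p a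
        rw [h1, hp] at h2
        simp only [norm_one, one_mul] at h2
        linarith
      have hpos3 : 0 < ‖(1 : ℂ) - (inner ℂ p a : ℂ)‖ ^ 2 / (1 - ‖a‖ ^ 2) :=
        div_pos (pow_pos (norm_pos_iff.2 hnum) 2) hden
      refine ⟨?_, hpos3⟩
      -- the scalar function q(t) = re ⟪p, G t⟫ and its derivative
      have hq1 : HasDerivAt (fun t => (inner ℂ p (G t) : ℂ)) (inner ℂ p D : ℂ) 0 := by
        have h1 : HasFDerivAt (fun w : 𝔼 n => (inner ℂ p w : ℂ))
            ((innerSL ℂ p).restrictScalars ℝ) (G 0) :=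
          ((innerSL ℂ p).hasFDerivAt).restrictScalars ℝ
        exact h1.comp_hasDerivAt 0 hGd
      have hqd : HasDerivAt (fun t => ((inner ℂ p (G t) : ℂ)).re) ((inner ℂ p D : ℂ).re) 0 :=
        Complex.reCLM.hasFDerivAt.comp_hasDerivAt 0 hq1
      have hq0 : (inner ℂ p (G 0) : ℂ) = 1 := by
        rw [hG0]
        rw [@inner_self_eq_norm_sq_to_K ℂ, hp]
        norm_num
      -- slope limit along t → 0⁻
      have hslope : Tendsto (fun t : ℝ => (((inner ℂ p (G t) : ℂ)).re - 1) / t) (nhdsWithin 0 (Iio 0))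
          (nhds ((inner ℂ p D : ℂ).re)) := by
        have h1 := hasDerivAt_iff_tendsto_slope.1 hqd
        have h2 := h1.mono_left (nhdsWithin_mono 0 (fun x hx => ne_of_lt hx))
        apply h2.congr
        intro t
        simp only [slope_def_field, slope, vsub_eq_sub, sub_zero, hq0, Complex.one_re]
        rw [div_eq_inv_mul]
        rfl
      -- the comparison function B
      set B : ℝ → ℝ := fun t =>
        (2 + t) / 2 * (‖(1 : ℂ) - (inner ℂ a (g (p + t • p)) : ℂ)‖ ^ 2 / (1 - ‖a‖ ^ 2)) with hBdef
      have hcurve : ContinuousAt (fun t : ℝ => p + t • p) 0 := by fun_prop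
      have hgc : ContinuousAt g ((fun t : ℝ => p + t • p) 0) := by simpa using hgd.continuousAt
      have hGcont : ContinuousAt G 0 :=
        ContinuousAt.comp (g := g) (f := fun t : ℝ => p + t • p) hgc hcurve
      have hBcont : ContinuousAt B 0 := by
        apply ContinuousAt.mul
        · fun_prop
        · apply ContinuousAt.div_const
          apply ContinuousAt.pow
          apply ContinuousAt.norm
          exact continuousAt_const.sub ((innerSL ℂ a).continuous.continuousAt.comp hGcont)
      have hsymm : ‖(1 : ℂ) - (inner ℂ a p : ℂ)‖ = ‖(1 : ℂ) - (inner ℂ p a : ℂ)‖ := by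
        rw [← RCLike.norm_conj]
        congr 1
        rw [map_sub, map_one, inner_conj_symm]
      have hB0 : B 0 = ‖(1 : ℂ) - (inner ℂ p a : ℂ)‖ ^ 2 / (1 - ‖a‖ ^ 2) := by
        have : g (p + (0:ℝ) • p) = p := by simpa using hgp
        rw [hBdef]
        simp only [this]
        rw [hsymm]
        ring
      have hBl : Tendsto B (nhdsWithin 0 (Iio 0))
          (nhds (‖(1 : ℂ) - (inner ℂ p a : ℂ)‖ ^ 2 / (1 - ‖a‖ ^ 2))) := by
        rw [← hB0]
        exact hBcont.continuousWithinAt.tendsto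
      -- eventual inequality B t ≤ slope t
      have hUev : ∀ᶠ t in nhds (0:ℝ), p + t • p ∈ U := by
        have : (fun t : ℝ => p + t • p) ⁻¹' U ∈ nhds (0:ℝ) :=
          hcurve.preimage_mem_nhds (hUopen.mem_nhds (by simpa using hpU))
        exact this
      have hev1 : ∀ᶠ t in nhds (0:ℝ), -1 < t := eventually_gt_nhds (by norm_num)
      have hevlt : ∀ᶠ t in nhdsWithin (0:ℝ) (Iio 0), t < 0 := self_mem_nhdsWithin
      have hineq : ∀ᶠ t in nhdsWithin (0:ℝ) (Iio 0),
          B t ≤ (((inner ℂ p (G t) : ℂ)).re - 1) / t := by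
        filter_upwards [hUev.filter_mono nhdsWithin_le_nhds, hev1.filter_mono nhdsWithin_le_nhds,
          hevlt] with t htU ht1 ht0
        set z : 𝔼 n := p + t • p with hzdef
        have hznorm : ‖z‖ = 1 + t := by
          rw [hzdef, show p + t • p = ((1+t : ℝ)) • p by rw [add_smul, one_smul]]
          rw [norm_smul, hp, mul_one, Real.norm_eq_abs, abs_of_pos (by linarith)]
        have hzball : z ∈ ball (0 : 𝔼 n) 1 := by
          rw [mem_ball_zero_iff, hznorm]; linarith
        have hfz : f z = g z := hfg ⟨hzball, htU⟩
        have key := ball_key hf hfself hzball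
        rw [← hadef] at key
        have hfz1 : ‖f z‖ < 1 := mem_ball_zero_iff.1 (hfself hzball)
        set q : ℝ := ((inner ℂ p (G t) : ℂ)).re with hqdef
        have hre : q ≤ ‖f z‖ := by
          have h1 : q = ((inner ℂ p (f z) : ℂ)).re := by rw [hqdef, hGdef]; rw [hfz]
          have h2 : ((inner ℂ p (f z) : ℂ)).re ≤ ‖(inner ℂ p (f z) : ℂ)‖ := Complex.re_le_norm _
          have h3 : ‖(inner ℂ p (f z) : ℂ)‖ ≤ ‖p‖ * ‖f z‖ := norm_inner_le_norm p (f z)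
          rw [hp, one_mul] at h3
          linarith
        have h1q : 1 - ‖f z‖ ^ 2 ≤ 2 * (1 - q) := by nlinarith [norm_nonneg (f z)]
        have hnz : 1 - ‖z‖ ^ 2 = (-t) * (2 + t) := by rw [hznorm]; ring
        set N : ℝ := ‖(1 : ℂ) - (inner ℂ a (f z) : ℂ)‖ with hNdef
        have hstep : N ^ 2 * ((-t) * (2 + t)) ≤ (1 - ‖a‖ ^ 2) * (2 * (1 - q)) := by
          rw [← hnz]
          calc N ^ 2 * (1 - ‖z‖ ^ 2) ≤ (1 - ‖a‖ ^ 2) * (1 - ‖f z‖ ^ 2) := key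
            _ ≤ (1 - ‖a‖ ^ 2) * (2 * (1 - q)) := by
                exact mul_le_mul_of_nonneg_left h1q hden.le
        have hBt : B t = (2 + t) * N ^ 2 / (2 * (1 - ‖a‖ ^ 2)) := by
          rw [hBdef, hNdef]
          simp only [← hzdef, ← hfz]
          rw [div_mul_div_comm]
        rw [hBt]
        rw [show (q - 1) / t = (1 - q) / (-t) by rw [← neg_div_neg_eq]; ring_nf]
        rw [div_le_div_iff₀ (by positivity) (by linarith)]
        nlinarith [hstep]
      -- conclude
      exact le_of_tendsto_of_tendsto hBl hslope hineq
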